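/- Let Q be a finite quiver without loops with vertices 1,…,n, and let I ⊂ kQ be an admissible ideal generated by paths with canonical generating set G of minimal-length paths in I. Suppose every maximal vertex of each path in G is external. Then: (a) for each vertex i, the only path from i to i in the subquiver Q_{≤i} not lying in I is the trivial path (i.e. π^i_{ii} = 1); (b) every path not lying in I has a unique maximal vertex; and (c) the concatenation of two paths not lying in I at their common maximal vertex does not lie in I. -/

import Mathlib

open CategoryTheory

universe u

namespace HWPaper

/-- A finite quiver without loops on the ordered vertex set `Fin n`. -/
structure FinQuiver (n : ℕ) where
  /-- the arrows from `i` to `j` -/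
  Arr : Fin n → Fin n → Type
  finite : ∀ i j, Finite (Arr i j)
  noLoops : ∀ i, IsEmpty (Arr i i)

variable {n : ℕ}

/-- The vertex set of a finite quiver, as a quiver. -/
def QVert (_ : FinQuiver n) : Type := Fin n

instance (Q : FinQuiver n) : Quiver (QVert Q) := ⟨fun i j => Q.Arr i j⟩

instance (Q : FinQuiver n) : LinearOrder (QVert Q) :=
  inferInstanceAs (LinearOrder (Fin n))

instance (Q : FinQuiver n) : Fintype (QVert Q) :=
  inferInstanceAs (Fintype (Fin n))

/-- The list of vertices visited by a path (including its endpoints, with multiplicity). -/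
def pathVerts {Q : FinQuiver n} {i : QVert Q} :
    ∀ {j : QVert Q}, Quiver.Path i j → List (QVert Q)
  | _, Quiver.Path.nil => [i]
  | j, Quiver.Path.cons p _ => pathVerts p ++ [j]

/-- The internal vertices of a path: all visited vertices except the two endpoints. -/
def internalVerts {Q : FinQuiver n} {i j : QVert Q} (p : Quiver.Path i j) :
    List (QVert Q) :=
  ((pathVerts p).drop 1).dropLast

/-- `Idl` is (the set of paths spanning) a two-sided ideal of the path algebra generated
by paths: a set of paths closed under pre- and post-composition with arbitrary paths. -/
def IsPathIdeal (Q : FinQuiver n) (Idl : ∀ ⦃i j : QVert Q⦄, Quiver.Path i j → Prop) : Prop :=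
  ∀ ⦃i j a b : QVert Q⦄ (u : Quiver.Path a i) (p : Quiver.Path i j) (v : Quiver.Path j b),
    Idl p → Idl ((u.comp p).comp v)

/-- The ideal `Idl` is admissible: it contains all sufficiently long paths and consists of
paths of length at least two. -/
def IsAdmissible (Q : FinQuiver n) (Idl : ∀ ⦃i j : QVert Q⦄, Quiver.Path i j → Prop) : Prop :=
  (∃ N : ℕ, ∀ ⦃i j : QVert Q⦄ (p : Quiver.Path i j), N ≤ p.length → Idl p) ∧
  (∀ ⦃i j : QVert Q⦄ (p : Quiver.Path i j), Idl p → 2 ≤ p.length)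

/-- `p` belongs to the canonical generating set `G` of the monomial ideal `Idl`:
`p` lies in `Idl` and is of minimal length, i.e. no proper factor of `p` lies in `Idl`. -/
def IsMinimalRel {Q : FinQuiver n} (Idl : ∀ ⦃i j : QVert Q⦄, Quiver.Path i j → Prop)
    {i j : QVert Q} (p : Quiver.Path i j) : Prop :=
  Idl p ∧ ∀ ⦃a b : QVert Q⦄ (u : Quiver.Path i a) (g : Quiver.Path a b)
    (v : Quiver.Path b j), p = (u.comp g).comp v → Idl g →
      u.length = 0 ∧ v.length = 0

/-- `π^k_{i j}`: the number of paths from `i` to `j` in the full subquiver `Q_{≤ k}`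
which do not lie in the ideal. -/
noncomputable def pathCountLe (Q : FinQuiver n)
    (Idl : ∀ ⦃i j : QVert Q⦄, Quiver.Path i j → Prop) (k i j : QVert Q) : ℕ :=
  Nat.card {p : Quiver.Path i j // (∀ v ∈ pathVerts p, v ≤ k) ∧ ¬ Idl p}

/-- `π^n_{i j}`: the number of paths from `i` to `j` in `Q` which do not lie in the ideal. -/
noncomputable def pathCount (Q : FinQuiver n)
    (Idl : ∀ ⦃i j : QVert Q⦄, Quiver.Path i j → Prop) (i j : QVert Q) : ℕ :=
  Nat.card {p : Quiver.Path i j // ¬ Idl p}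

/-- Green–Schroll's criterion: all maximal vertices of every path in the canonical
generating set `G` are external, i.e. no internal vertex of a minimal relation is
maximal among the vertices of that relation. -/
def GreenSchrollCondition (Q : FinQuiver n)
    (Idl : ∀ ⦃i j : QVert Q⦄, Quiver.Path i j → Prop) : Prop :=
  ∀ ⦃i j : QVert Q⦄ (p : Quiver.Path i j), IsMinimalRel Idl p →
    ∀ v ∈ internalVerts p, ∃ w ∈ pathVerts p, v < w

/-- The numerical path-count criterion: `π^i_{i i} = 1` for each vertex `i`, and
`π^n_{i k} = ∑_j π^j_{i j} · π^j_{j k}` for all vertices `i, k`. -/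
def PathCountCondition (Q : FinQuiver n)
    (Idl : ∀ ⦃i j : QVert Q⦄, Quiver.Path i j → Prop) : Prop :=
  (∀ i : QVert Q, pathCountLe Q Idl i i i = 1) ∧
  (∀ i k : QVert Q, pathCount Q Idl i k =
    ∑ j : QVert Q, pathCountLe Q Idl j i j * pathCountLe Q Idl j j k)

/-! ### Auxiliary lemmas -/

section Aux

open Quiver

variable {Q : FinQuiver n}

lemma pathVerts_cons {i j k : QVert Q} (p : Path i j) (e : j ⟶ k) :
    pathVerts (p.cons e) = pathVerts p ++ [k] := rfl

lemma pathVerts_eq_cons {i j : QVert Q} (p : Path i j) :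
    ∃ l, pathVerts p = i :: l := by
  induction p with
  | nil => exact ⟨[], rfl⟩
  | cons p e ih =>
      obtain ⟨l, hl⟩ := ih
      exact ⟨l ++ [_], by rw [pathVerts_cons, hl]; rfl⟩

lemma pathVerts_ne_nil {i j : QVert Q} (p : Path i j) : pathVerts p ≠ [] := by
  obtain ⟨l, hl⟩ := pathVerts_eq_cons p
  simp [hl]

lemma end_mem_pathVerts {i j : QVert Q} (p : Path i j) : j ∈ pathVerts p := by
  cases p with
  | nil => simp [pathVerts]
  | cons p e => simp [pathVerts_cons]

lemma start_mem_pathVerts {i j : QVert Q} (p : Path i j) : i ∈ pathVerts p := by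
  obtain ⟨l, hl⟩ := pathVerts_eq_cons p
  simp [hl]

lemma pathVerts_comp {i j k : QVert Q} (p : Path i j) (q : Path j k) :
    pathVerts (p.comp q) = pathVerts p ++ (pathVerts q).drop 1 := by
  induction q with
  | nil => simp [pathVerts]
  | cons q e ih =>
      show pathVerts ((p.comp q).cons e) = _
      obtain ⟨l, hl⟩ := pathVerts_eq_cons q
      rw [pathVerts_cons, ih, pathVerts_cons, hl]
      simp

lemma mem_pathVerts_comp {v i j k : QVert Q} (p : Path i j) (q : Path j k) :
    v ∈ pathVerts (p.comp q) ↔ v ∈ pathVerts p ∨ v ∈ pathVerts q := by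
  obtain ⟨l, hl⟩ := pathVerts_eq_cons q
  rw [pathVerts_comp, hl]
  simp only [List.mem_append, List.drop_one, List.tail_cons, List.mem_cons]
  constructor
  · rintro (h | h)
    · exact Or.inl h
    · exact Or.inr (Or.inr h)
  · rintro (h | rfl | h)
    · exact Or.inl h
    · exact Or.inl (end_mem_pathVerts p)
    · exact Or.inr h

/-- The path-splitting ("confluence") lemma. -/
lemma comp_split {i j : QVert Q} {v : QVert Q} (p : Path i v) :
    ∀ {x : QVert Q} (q : Path v j) (r : Path i x) (s : Path x j),
      p.comp q = r.comp s → q.length ≤ s.length →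
      ∃ t : Path x v, p = r.comp t ∧ s = t.comp q := by
  intro x q
  induction q generalizing x with
  | nil =>
      intro r s h _
      exact ⟨s, by simpa using h, rfl⟩
  | cons q e ih =>
      intro r s h hlen
      cases s with
      | nil => simp at hlen
      | cons s' e' =>
          have hobj := Quiver.Path.obj_eq_of_cons_eq_cons h
          subst hobj
          have h1 : p.comp q = r.comp s' :=
            eq_of_heq (Quiver.Path.heq_of_cons_eq_cons h)
          have h2 : e = e' := eq_of_heq (Quiver.Path.hom_heq_of_cons_eq_cons h)
          obtain ⟨t, ht1, ht2⟩ := ih r s' h1 (Nat.succ_le_succ_iff.mp (by simpa using hlen))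
          exact ⟨t, ht1, by rw [Quiver.Path.comp_cons, ht2, h2]⟩

/-- Every path in the ideal has a factor which is a minimal relation. -/
lemma exists_minimalRel {Idl : ∀ ⦃i j : QVert Q⦄, Quiver.Path i j → Prop}
    {i j : QVert Q} (p : Path i j) (hp : Idl p) :
    ∃ (a b : QVert Q) (u : Path i a) (g : Path a b) (w : Path b j),
      p = (u.comp g).comp w ∧ IsMinimalRel Idl g := by
  classical
  have hex : ∃ ℓ : ℕ, ∃ a b : QVert Q, ∃ (u : Path i a) (g : Path a b) (w : Path b j),
      p = (u.comp g).comp w ∧ Idl g ∧ g.length = ℓ :=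
    ⟨p.length, i, j, Path.nil, p, Path.nil, by simp, hp, rfl⟩
  obtain ⟨a, b, u, g, w, hfac, hg, hlen⟩ := Nat.find_spec hex
  refine ⟨a, b, u, g, w, hfac, hg, ?_⟩
  intro a' b' u' g' v' hsplit hg'
  have hfac' : p = ((u.comp u').comp g').comp (v'.comp w) := by
    rw [hfac, hsplit]; simp [Quiver.Path.comp_assoc]
  have hmin : Nat.find hex ≤ g'.length :=
    Nat.find_min' hex ⟨_, _, _, _, _, hfac', hg', rfl⟩
  have hglen : g.length = u'.length + g'.length + v'.length := by
    rw [hsplit]; simp [Quiver.Path.length_comp]; omega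
  omega

lemma mid_mem_internalVerts {a v b : QVert Q} (p : Path a v) (q : Path v b)
    (hp : 0 < p.length) (hq : 0 < q.length) : v ∈ internalVerts (p.comp q) := by
  cases p with
  | nil => simp at hp
  | cons p' e =>
      cases q with
      | nil => simp at hq
      | cons q' e' =>
          obtain ⟨l, hl⟩ := pathVerts_eq_cons p'
          show v ∈ ((pathVerts ((p'.cons e).comp (q'.cons e'))).drop 1).dropLast
          rw [show (p'.cons e).comp (q'.cons e') = ((p'.cons e).comp q').cons e' from rfl,
            pathVerts_cons, pathVerts_comp, pathVerts_cons, hl]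
          simp only [List.cons_append, List.drop_succ_cons, List.drop_zero]
          rw [List.dropLast_concat]
          simp

/-- The key crossing lemma: if a composite at a maximal vertex lies in the ideal,
then one of the two factors lies in the ideal. -/
lemma ideal_comp_cases {Idl : ∀ ⦃i j : QVert Q⦄, Quiver.Path i j → Prop}
    (hIdl : IsPathIdeal Q Idl) (hGS : GreenSchrollCondition Q Idl)
    {i v j : QVert Q} (p : Path i v) (q : Path v j)
    (hp : ∀ w ∈ pathVerts p, w ≤ v) (hq : ∀ w ∈ pathVerts q, w ≤ v)
    (h : Idl (p.comp q)) : Idl p ∨ Idl q := by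
  obtain ⟨a, b, u, g, w, hfac, hgmin⟩ := exists_minimalRel (p.comp q) h
  have hg := hgmin.1
  rcases le_or_gt q.length w.length with hle | hlt
  · -- g is a factor of p
    obtain ⟨t, ht1, -⟩ := comp_split p q (u.comp g) w hfac hle
    exact Or.inl (ht1 ▸ hIdl u g t hg)
  · rcases le_or_gt (g.comp w).length q.length with hle2 | hlt2
    · -- g is a factor of q
      obtain ⟨t, -, ht2⟩ := comp_split u (g.comp w) p q
        (by rw [← Quiver.Path.comp_assoc, ← hfac]) hle2
      refine Or.inr ?_
      rw [ht2, ← Quiver.Path.comp_assoc]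
      exact hIdl t g w hg
    · -- v is internal to g : contradiction with Green–Schroll
      exfalso
      obtain ⟨t, ht1, ht2⟩ := comp_split (u.comp g) w p q hfac.symm (le_of_lt hlt)
      have htlen : q.length = t.length + w.length := by
        rw [ht2]; simp [Quiver.Path.length_comp]
      have htg : t.length ≤ g.length := by
        rw [Quiver.Path.length_comp] at hlt2; omega
      obtain ⟨t2, ht3, ht4⟩ := comp_split p t u g ht1.symm htg
      have ht2pos : 0 < t2.length := by
        have : g.length = t2.length + t.length := by
          rw [ht4]; simp [Quiver.Path.length_comp]
        rw [Quiver.Path.length_comp] at hlt2; omega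
      have htpos : 0 < t.length := by omega
      have hint : v ∈ internalVerts g := by
        rw [ht4]; exact mid_mem_internalVerts t2 t ht2pos htpos
      obtain ⟨w', hw'mem, hvw'⟩ := hGS g hgmin v hint
      have hw'le : w' ≤ v := by
        rw [ht4, mem_pathVerts_comp] at hw'mem
        rcases hw'mem with hm | hm
        · exact hp w' (by rw [ht3, mem_pathVerts_comp]; exact Or.inr hm)
        · exact hq w' (by rw [ht2, mem_pathVerts_comp]; exact Or.inl hm)
      exact absurd hw'le (not_le.mpr hvw')

/-- Powers of a cycle. -/
def cyclePow {Q : FinQuiver n} {i : QVert Q} (c : Quiver.Path i i) :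
    ℕ → Quiver.Path i i
  | 0 => Quiver.Path.nil
  | m + 1 => (cyclePow c m).comp c

lemma cyclePow_verts {i : QVert Q} (c : Path i i)
    (hc : ∀ w ∈ pathVerts c, w ≤ i) (m : ℕ) :
    ∀ w ∈ pathVerts (cyclePow c m), w ≤ i := by
  induction m with
  | zero => intro w hw; simp [cyclePow, pathVerts] at hw; simp [hw]
  | succ m ih =>
      intro w hw
      rw [cyclePow, mem_pathVerts_comp] at hw
      rcases hw with hw | hw
      · exact ih w hw
      · exact hc w hw

lemma cyclePow_length {i : QVert Q} (c : Path i i) (hlen : 0 < c.length) (m : ℕ) :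
    m ≤ (cyclePow c m).length := by
  induction m with
  | zero => simp
  | succ m ih =>
      rw [cyclePow, Quiver.Path.length_comp]
      omega

/-- Part (a), main content: every nontrivial cycle at `i` with all vertices `≤ i`
lies in the ideal. -/
lemma cycle_in_ideal {Idl : ∀ ⦃i j : QVert Q⦄, Quiver.Path i j → Prop}
    (hIdl : IsPathIdeal Q Idl) (hadm : IsAdmissible Q Idl)
    (hGS : GreenSchrollCondition Q Idl)
    {i : QVert Q} (c : Path i i)
    (hc : ∀ w ∈ pathVerts c, w ≤ i) (hlen : 0 < c.length) : Idl c := by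
  by_contra hnc
  obtain ⟨N, hN⟩ := hadm.1
  have hpow : ∀ m : ℕ, ¬ Idl (cyclePow c m) := by
    intro m
    induction m with
    | zero =>
        intro h
        have := hadm.2 _ h
        simp [cyclePow] at this
    | succ m ih =>
        intro h
        rw [cyclePow] at h
        rcases ideal_comp_cases hIdl hGS (cyclePow c m) c
            (cyclePow_verts c hc m) hc h with h' | h'
        · exact ih h'
        · exact hnc h'
  exact hpow N (hN _ (cyclePow_length c hlen N))

lemma exists_list_max {α : Type*} [LinearOrder α] (L : List α) (h : L ≠ []) :
    ∃ v ∈ L, ∀ w ∈ L, w ≤ v := by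
  induction L with
  | nil => exact absurd rfl h
  | cons a L ih =>
      by_cases hL : L = []
      · subst hL; exact ⟨a, by simp, by simp⟩
      · obtain ⟨v, hv, hmax⟩ := ih hL
        rcases le_total a v with hav | hva
        · refine ⟨v, List.mem_cons_of_mem _ hv, ?_⟩
          intro w hw
          rcases List.mem_cons.mp hw with rfl | hw
          · exact hav
          · exact hmax w hw
        · refine ⟨a, List.mem_cons_self, ?_⟩
          intro w hw
          rcases List.mem_cons.mp hw with rfl | hw
          · exact le_rfl
          · exact le_trans (hmax w hw) hva

lemma split_at_mem {i j v : QVert Q} (p : Path i j) (hv : v ∈ pathVerts p) :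
    ∃ (a : Path i v) (b : Path v j), p = a.comp b := by
  induction p with
  | nil =>
      simp only [pathVerts, List.mem_singleton] at hv
      subst hv
      exact ⟨Path.nil, Path.nil, rfl⟩
  | cons p e ih =>
      rw [pathVerts_cons, List.mem_append, List.mem_singleton] at hv
      rcases hv with hv | rfl
      · obtain ⟨a, b, rfl⟩ := ih hv
        exact ⟨a, b.cons e, rfl⟩
      · exact ⟨p.cons e, Path.nil, rfl⟩

lemma exists_cycle_of_two_le_count {i j v : QVert Q} (p : Path i j)
    (h : 2 ≤ (pathVerts p).count v) :
    ∃ (a : Path i v) (c : Path v v) (b : Path v j),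
      p = (a.comp c).comp b ∧ 0 < c.length := by
  induction p with
  | nil =>
      simp only [pathVerts] at h
      have : (List.count v [i]) ≤ 1 := by
        rcases eq_or_ne v i with rfl | hne
        · simp
        · simp [List.count_cons, List.count_nil, hne, Ne.symm hne]
      omega
  | cons p e ih =>
      rename_i k
      rw [pathVerts_cons, List.count_append] at h
      by_cases h2 : 2 ≤ (pathVerts p).count v
      · obtain ⟨a, c, b, rfl, hc⟩ := ih h2
        exact ⟨a, c, b.cons e, rfl, hc⟩
      · have hj : v = k := by
          by_contra hne
          have : List.count v [k] = 0 := by simp [List.count_cons, List.count_nil, hne, Ne.symm hne]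
          omega
        subst hj
        have hv : v ∈ pathVerts p := by
          have h1 : 1 ≤ (pathVerts p).count v := by
            have : List.count v [v] = 1 := by simp
            omega
          exact List.count_pos_iff.mp h1
        obtain ⟨a, b, rfl⟩ := split_at_mem p hv
        exact ⟨a, b.cons e, Path.nil, rfl, by simp⟩

end Aux

/-- **Lemma.** Suppose every maximal vertex of each path in the canonical generating set
`G` of the admissible monomial ideal `Idl` is external. Then:
(a) for each vertex `i`, the only path from `i` to `i` in `Q_{≤ i}` not lying in the ideal
is the trivial path, i.e. `π^i_{ii} = 1`;
(b) every path not lying in the ideal has a unique maximal vertex; and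
(c) the concatenation of two paths not lying in the ideal at their common maximal vertex
does not lie in the ideal. -/
theorem greenSchroll_consequences (Q : FinQuiver n)
    (Idl : ∀ ⦃i j : QVert Q⦄, Quiver.Path i j → Prop)
    (hIdl : IsPathIdeal Q Idl) (hadm : IsAdmissible Q Idl)
    (hGS : GreenSchrollCondition Q Idl) :
    (∀ (i : QVert Q) (p : Quiver.Path i i),
        (∀ v ∈ pathVerts p, v ≤ i) → ¬ Idl p → p.length = 0) ∧
    (∀ i : QVert Q, pathCountLe Q Idl i i i = 1) ∧
    (∀ ⦃i j : QVert Q⦄ (p : Quiver.Path i j), ¬ Idl p →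
      ∃ v : QVert Q, ((v ∈ pathVerts p ∧ ∀ w ∈ pathVerts p, w ≤ v) ∧
        (pathVerts p).count v = 1)) ∧
    (∀ ⦃i v j : QVert Q⦄ (p : Quiver.Path i v) (q : Quiver.Path v j),
      ¬ Idl p → ¬ Idl q →
      (∀ w ∈ pathVerts p, w ≤ v) → (∀ w ∈ pathVerts q, w ≤ v) →
      ¬ Idl (p.comp q)) := by
  have partA : ∀ (i : QVert Q) (p : Quiver.Path i i),
      (∀ v ∈ pathVerts p, v ≤ i) → ¬ Idl p → p.length = 0 := by
    intro i p hverts hnp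
    by_contra h0
    exact hnp (cycle_in_ideal hIdl hadm hGS p hverts (Nat.pos_of_ne_zero h0))
  refine ⟨partA, ?_, ?_, ?_⟩
  · -- π^i_{ii} = 1
    intro i
    rw [pathCountLe, Nat.card_eq_one_iff_unique]
    have hnil : (∀ v ∈ pathVerts (Quiver.Path.nil : Quiver.Path i i), v ≤ i) ∧
        ¬ Idl (Quiver.Path.nil : Quiver.Path i i) := by
      constructor
      · intro v hv
        simp only [pathVerts, List.mem_singleton] at hv
        simp [hv]
      · intro h
        have := hadm.2 _ h
        simp at this
    constructor
    · constructor
      intro ⟨p, hp1, hp2⟩ ⟨q, hq1, hq2⟩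
      have hp0 := partA i p hp1 hp2
      have hq0 := partA i q hq1 hq2
      have := Quiver.Path.eq_nil_of_length_zero p hp0
      have := Quiver.Path.eq_nil_of_length_zero q hq0
      subst this
      simp_all
    · exact ⟨⟨Quiver.Path.nil, hnil⟩⟩
  · -- unique maximal vertex
    intro i j p hnp
    obtain ⟨v, hv, hmax⟩ := exists_list_max (pathVerts p) (pathVerts_ne_nil p)
    refine ⟨v, ⟨hv, hmax⟩, ?_⟩
    have h1 : 1 ≤ (pathVerts p).count v := List.count_pos_iff.mpr hv
    have h2 : ¬ 2 ≤ (pathVerts p).count v := by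
      intro h2
      obtain ⟨a, c, b, rfl, hclen⟩ := exists_cycle_of_two_le_count p h2
      have hcverts : ∀ w ∈ pathVerts c, w ≤ v := by
        intro w hw
        apply hmax
        rw [mem_pathVerts_comp, mem_pathVerts_comp]
        exact Or.inl (Or.inr hw)
      have : Idl ((a.comp c).comp b) :=
        hIdl a c b (cycle_in_ideal hIdl hadm hGS c hcverts hclen)
      exact hnp this
    omega
  · -- concatenation at common maximal vertex
    intro i v j p q hnp hnq hp hq hcomp
    rcases ideal_comp_cases hIdl hGS p q hp hq hcomp with h | h
    · exact hnp h
    · exact hnq h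

end HWPaper
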